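/- arXiv:2108.09842 — 2 statements merged into one kernel-verified Lean document; each statement's English description precedes it below -/
import Mathlib

section
/- Let f : ℝ² → ℝ be a homogeneous polynomial of degree n ≥ 2 and let A be an angle such that the gradient of f at (cos A, sin A) is nonzero. Define, for (x,y) ∈ ℝ², W = √(1+f_x²+f_y²), d = 1 − √((W−1)/(W+1)), and Δ² = [((1+f_y²)·f_xx − 2·f_x·f_y·f_xy + (1+f_x²)·f_yy)² − 4·(1+f_x²+f_y²)·(f_xx·f_yy − f_xy²)] / (1+f_x²+f_y²)³, the square of the difference of principal curvatures of the graph z = f(x,y). Then Δ²/d², evaluated at (R·cos A, R·sin A), tends to 0 as R → ∞ if and only if Q(f)(cos A, sin A) = 0, where Q(f) = f_xx·f_y² − 2·f_xy·f_x·f_y + f_yy·f_x². That is, the graph has an umbilic point at infinity at A precisely when the tangent direction to the level set of f at infinity is an asymptotic direction. -/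
open MvPolynomial Real Filter

/-- Evaluate a bivariate polynomial at `(x, y)`. -/
noncomputable def ev (p : MvPolynomial (Fin 2) ℝ) (x y : ℝ) : ℝ :=
  eval ![x, y] p

/-- Formal partial derivative in the first variable. -/
noncomputable def Dx (p : MvPolynomial (Fin 2) ℝ) : MvPolynomial (Fin 2) ℝ :=
  pderiv (0 : Fin 2) p

/-- Formal partial derivative in the second variable. -/
noncomputable def Dy (p : MvPolynomial (Fin 2) ℝ) : MvPolynomial (Fin 2) ℝ :=
  pderiv (1 : Fin 2) p

/-- The square `(κ₁ − κ₂)²` of the difference of the principal curvatures of the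
graph `z = f(x,y)` at `(x,y)`, for `f` the polynomial function determined by `p`. -/
noncomputable def Delta2 (p : MvPolynomial (Fin 2) ℝ) (x y : ℝ) : ℝ :=
  (((1 + ev (Dy p) x y ^ 2) * ev (Dx (Dx p)) x y
      - 2 * ev (Dx p) x y * ev (Dy p) x y * ev (Dy (Dx p)) x y
      + (1 + ev (Dx p) x y ^ 2) * ev (Dy (Dy p)) x y) ^ 2
    - 4 * (1 + ev (Dx p) x y ^ 2 + ev (Dy p) x y ^ 2)
        * (ev (Dx (Dx p)) x y * ev (Dy (Dy p)) x y - ev (Dy (Dx p)) x y ^ 2))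
  / (1 + ev (Dx p) x y ^ 2 + ev (Dy p) x y ^ 2) ^ 3

/-- `W = √(1 + f_x² + f_y²)`. -/
noncomputable def Wgr (p : MvPolynomial (Fin 2) ℝ) (x y : ℝ) : ℝ :=
  Real.sqrt (1 + ev (Dx p) x y ^ 2 + ev (Dy p) x y ^ 2)

/-- The distance to infinity `d = 1 − √((W−1)/(W+1)) = 1 − |ξ|` of the point `(x,y)`
under the Gauss map of the graph `z = f(x,y)`. -/
noncomputable def dInf (p : MvPolynomial (Fin 2) ℝ) (x y : ℝ) : ℝ :=
  1 - Real.sqrt ((Wgr p x y - 1) / (Wgr p x y + 1))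

/-- `Q(f) = f_xx·f_y² − 2·f_xy·f_x·f_y + f_yy·f_x²`. -/
noncomputable def Qf (p : MvPolynomial (Fin 2) ℝ) : MvPolynomial (Fin 2) ℝ :=
  Dx (Dx p) * (Dy p) ^ 2 - 2 * Dy (Dx p) * Dx p * Dy p + Dy (Dy p) * (Dx p) ^ 2

lemma deg2 (d : Fin 2 →₀ ℕ) : d.degree = d 0 + d 1 := by
  rw [Finsupp.degree_apply,
    Finset.sum_subset (Finset.subset_univ d.support)
      (by intro i _ hi; simpa using Finsupp.notMem_support_iff.mp hi),
    Fin.sum_univ_two]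

lemma hom_deg2 {p : MvPolynomial (Fin 2) ℝ} {n : ℕ} (hp : p.IsHomogeneous n)
    {d : Fin 2 →₀ ℕ} (hd : coeff d p ≠ 0) : d 0 + d 1 = n := by
  have := hp hd
  change Finsupp.weight (fun _ => 1) d = n at this
  rw [← Finsupp.degree_eq_weight_one, deg2] at this
  exact this

lemma isHomogeneous_pderiv' {p : MvPolynomial (Fin 2) ℝ} {n : ℕ}
    (hp : p.IsHomogeneous (n+1)) (i : Fin 2) : (pderiv i p).IsHomogeneous n := by
  conv_lhs => rw [← p.support_sum_monomial_coeff]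
  rw [map_sum]
  apply IsHomogeneous.sum
  intro d hd
  rw [pderiv_monomial]
  by_cases h : d i = 0
  · rw [h]; simpa using isHomogeneous_zero _ _ n
  · apply isHomogeneous_monomial
    have hdeg : d 0 + d 1 = n + 1 := hom_deg2 hp (mem_support_iff.mp hd)
    rw [deg2, Finsupp.tsub_apply, Finsupp.tsub_apply]
    fin_cases i <;> simp only [Fin.mk_zero, Fin.mk_one, Fin.isValue, Finsupp.single_apply] at h ⊢ <;> simp <;> omega

lemma ev_scale {p : MvPolynomial (Fin 2) ℝ} {n : ℕ} (hp : p.IsHomogeneous n)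
    (R x y : ℝ) : ev p (R * x) (R * y) = R ^ n * ev p x y := by
  have hv : (![R * x, R * y] : Fin 2 → ℝ) = fun i => R * ![x, y] i := by
    funext i; fin_cases i <;> simp
  rw [ev, ev, hv, eval_eq', eval_eq', Finset.mul_sum]
  apply Finset.sum_congr rfl
  intro d hd
  have hdeg : ∑ i : Fin 2, d i = n := by
    rw [Fin.sum_univ_two]; exact hom_deg2 hp (mem_support_iff.mp hd)
  calc coeff d p * ∏ i, (R * ![x,y] i) ^ d i
      = coeff d p * ((∏ i, R ^ d i) * ∏ i, ![x,y] i ^ d i) := by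
        rw [← Finset.prod_mul_distrib]; simp [mul_pow]
    _ = R ^ n * (coeff d p * ∏ i, ![x,y] i ^ d i) := by
        rw [Finset.prod_pow_eq_pow_sum, hdeg]; ring


lemma dd_bounds (u : ℝ) (hu : 1 ≤ u) :
    1 / (4*u) ≤ (1 - √((√u - 1)/(√u + 1)))^2 ∧ (1 - √((√u - 1)/(√u + 1)))^2 ≤ 4 / u := by
  have hu0 : (0:ℝ) < u := by linarith
  set W := √u with hWdef
  have hW : 1 ≤ W := by
    rw [show (1:ℝ) = √1 by simp]; exact Real.sqrt_le_sqrt hu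
  have hW2 : W^2 = u := Real.sq_sqrt hu0.le
  have hWp : (0:ℝ) < W + 1 := by linarith
  set t := √((W-1)/(W+1)) with htdef
  have harg : 0 ≤ (W-1)/(W+1) := div_nonneg (by linarith) hWp.le
  have ht2 : t^2 = (W-1)/(W+1) := Real.sq_sqrt harg
  have ht0 : 0 ≤ t := Real.sqrt_nonneg _
  have ht1 : t ≤ 1 := by
    rw [show (1:ℝ) = √1 by simp]
    apply Real.sqrt_le_sqrt
    rw [div_le_one hWp]; linarith
  have hdd : (1 - t) * ((W+1)*(1+t)) = 2 := by
    have e1 : (1 - t) * ((W+1)*(1+t)) = (W+1) * (1 - t^2) := by ring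
    rw [e1, ht2]; field_simp; norm_num
  have hprod : 0 < (W+1)*(1+t) := by nlinarith
  have h1 : 1 - t = 2/((W+1)*(1+t)) := by
    rw [eq_div_iff hprod.ne']; exact hdd
  constructor
  · rw [h1, div_pow]
    have hX : ((W+1)*(1+t))^2 ≤ 16*u := by nlinarith
    calc 1/(4*u) = 2^2/(16*u) := by ring
      _ ≤ 2^2/(((W+1)*(1+t))^2) := by gcongr
  · rw [h1, div_pow]
    have hX : u ≤ ((W+1)*(1+t))^2 := by nlinarith
    calc (2:ℝ)^2/(((W+1)*(1+t))^2) ≤ 2^2/u := by gcongr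
      _ = 4/u := by norm_num

lemma one_le_u (m A R : ℝ) (hm : 0 < m) (hA : 1 ≤ A) (hR : 1 ≤ R) :
    1 ≤ 1 + m*(A^2*R^2) := by
  nlinarith [mul_nonneg hm.le (by positivity : (0:ℝ) ≤ A^2*R^2)]

lemma u_le_bound (m A R : ℝ) (hm : 0 < m) (hA : 1 ≤ A) (hR : 1 ≤ R) :
    1 + m*(A^2*R^2) ≤ (1+m)*(A^2*R^2) := by
  have hA2 : (1:ℝ) ≤ A^2 := one_le_pow₀ hA
  have hRsq : (1:ℝ) ≤ R^2 := one_le_pow₀ hR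
  nlinarith [hA2, hRsq]

set_option maxHeartbeats 1000000 in
lemma lower_core (m PS q D A R : ℝ) (hm : 0 < m) (hA : 1 ≤ A) (hR : 1 ≤ R)
    (hq : q ≠ 0) (hPSR : 2*|PS| ≤ |q| * R) (hDR : 32*(1+m)*|D| ≤ q^2*R^2) :
    4*((1+m)*(A^2*R^2))^2 * (q^2/(32*(1+m)^2))
      ≤ (PS*A + q*(A^3*R^2))^2 - 4*(1+m*(A^2*R^2))*(D*A^2) := by
  have hA0 : (0:ℝ) < A := by linarith
  have hR0 : (0:ℝ) < R := by linarith
  have hq0 : (0:ℝ) < |q| := abs_pos.mpr hq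
  have hq2 : (0:ℝ) < q^2 := by positivity
  have hA2 : (1:ℝ) ≤ A^2 := one_le_pow₀ hA
  have hRsq : (1:ℝ) ≤ R^2 := one_le_pow₀ hR
  have hX1 : (1:ℝ) ≤ A^2*R^2 := by nlinarith
  have h2 := abs_sub_abs_le_abs_sub (q * (A^3*R^2)) (-(PS*A))
  rw [abs_neg, sub_neg_eq_add] at h2
  have h1 : |q * (A^3*R^2)| - |PS * A| ≤ |PS*A + q*(A^3*R^2)| := by
    calc |q * (A^3*R^2)| - |PS * A| ≤ |q*(A^3*R^2) + PS*A| := h2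
      _ = |PS*A + q*(A^3*R^2)| := by rw [add_comm]
  have e5 : |q * (A^3*R^2)| = |q| * (A^3*R^2) := by
    rw [abs_mul, abs_of_nonneg (by positivity : (0:ℝ) ≤ A^3*R^2)]
  have e6 : |PS * A| = |PS| * A := by rw [abs_mul, abs_of_nonneg hA0.le]
  rw [e5, e6] at h1
  have hA3 : A ≤ A^3 := by nlinarith
  have hPS : |PS| ≤ (|q|/2) * R := by linarith
  have h7 : |PS| * A ≤ (|q|/2) * (R*A) := by nlinarith
  have hA2R : (1:ℝ) ≤ A^2*R := by nlinarith
  have h8 : (|q|/2) * (R*A) ≤ (|q|/2) * (A^3*R^2) := by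
    have h8' : R*A ≤ A^3*R^2 := by
      nlinarith [mul_nonneg (mul_nonneg hA0.le hR0.le) (sub_nonneg.mpr hA2R)]
    have := mul_le_mul_of_nonneg_left h8' (by positivity : (0:ℝ) ≤ |q|/2)
    linarith
  have h3 : (|q|/2) * (A^3*R^2) ≤ |PS*A + q*(A^3*R^2)| := by linarith
  have hE2 : q^2/4 * (A^3*R^2)^2 ≤ (PS*A + q*(A^3*R^2))^2 := by
    have h4 : 0 ≤ (|q|/2) * (A^3*R^2) := by positivity
    calc q^2/4 * (A^3*R^2)^2 = ((|q|/2) * (A^3*R^2))^2 := by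
          linear_combination (-((A^3*R^2)^2)/4) * sq_abs q
      _ ≤ |PS*A + q*(A^3*R^2)|^2 := by gcongr
      _ = (PS*A + q*(A^3*R^2))^2 := sq_abs _
  have hDbd : 4*(1+m*(A^2*R^2))*(D*A^2) ≤ 4*(1+m)*|D| * (A^2*(A^2*R^2)) := by
    have h5 : D * A^2 ≤ |D| * A^2 := by nlinarith [le_abs_self D]
    have hu1 : (1:ℝ) ≤ 1 + m*(A^2*R^2) := one_le_u m A R hm hA hR
    have huU : 1 + m*(A^2*R^2) ≤ (1+m)*(A^2*R^2) := u_le_bound m A R hm hA hR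
    have h4u : (0:ℝ) ≤ 4*(1+m*(A^2*R^2)) := by linarith
    calc 4*(1+m*(A^2*R^2))*(D*A^2) ≤ 4*(1+m*(A^2*R^2))*(|D| * A^2) :=
          mul_le_mul_of_nonneg_left h5 h4u
      _ ≤ 4*((1+m)*(A^2*R^2))*(|D| * A^2) := by
          have := mul_le_mul_of_nonneg_right huU (mul_nonneg (abs_nonneg D) (sq_nonneg A))
          linarith [this]
      _ = 4*(1+m)*|D| * (A^2*(A^2*R^2)) := by ring
  have s1 : 4*(1+m)*|D| * (A^2*(A^2*R^2)) ≤ q^2/8 * (A^2*R^2)^2 := by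
    have hpos : (0:ℝ) ≤ A^4*R^2/8 := by positivity
    have h := mul_le_mul_of_nonneg_right hDR hpos
    calc 4*(1+m)*|D| * (A^2*(A^2*R^2)) = (32*(1+m)*|D|) * (A^4*R^2/8) := by ring
      _ ≤ (q^2*R^2) * (A^4*R^2/8) := h
      _ = q^2/8 * (A^2*R^2)^2 := by ring
  have s2 : q^2/4*(A^2*R^2)^2 ≤ q^2/4*(A^3*R^2)^2 := by
    have hA6 : (A^2*R^2)^2 ≤ (A^3*R^2)^2 := by nlinarith
    nlinarith
  have e1 : 4*((1+m)*(A^2*R^2))^2 * (q^2/(32*(1+m)^2)) = q^2/8 * (A^2*R^2)^2 := by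
    have h1m : ((1:ℝ)+m) ≠ 0 := by positivity
    field_simp; ring
  rw [e1]
  linarith [hE2, hDbd, s1, s2]

set_option maxHeartbeats 1000000 in
lemma upper_core (m PS D A R : ℝ) (hm : 0 < m) (hA : 1 ≤ A) (hR : 1 ≤ R) :
    |(PS*A + 0*(A^3*R^2))^2 - 4*(1+m*(A^2*R^2))*(D*A^2)| * R^2
      ≤ (4*PS^2 + 16*|D|)/m * (1+m*(A^2*R^2))^2 / 4 := by
  have hA0 : (0:ℝ) < A := by linarith
  have hR0 : (0:ℝ) < R := by linarith
  have hA2 : (1:ℝ) ≤ A^2 := one_le_pow₀ hA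
  have hRsq : (1:ℝ) ≤ R^2 := one_le_pow₀ hR
  have hu1 : (1:ℝ) ≤ 1 + m*(A^2*R^2) := one_le_u m A R hm hA hR
  have hu0 : (0:ℝ) < 1 + m*(A^2*R^2) := by linarith
  set u : ℝ := 1 + m*(A^2*R^2) with hu_def
  have hNbd : |(PS*A + 0*(A^3*R^2))^2 - 4*u*(D*A^2)| ≤ PS^2*A^2 + 4*u*(|D| * A^2) := by
    rw [show (PS*A + 0*(A^3*R^2))^2 = PS^2*A^2 by ring]
    calc |PS^2*A^2 - 4*u*(D*A^2)| ≤ |PS^2*A^2| + |4*u*(D*A^2)| := abs_sub _ _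
      _ = PS^2*A^2 + 4*u*(|D| * A^2) := by
          have e7 : |4*u*(D*A^2)| = 4*u*(|D| * A^2) := by
            simp [abs_mul, abs_of_nonneg hu0.le, abs_of_nonneg (sq_nonneg A)]
            try ring
          rw [abs_of_nonneg (by positivity : (0:ℝ) ≤ PS^2*A^2), e7]
  have hmu : m * (A^2*R^2) ≤ u := by rw [hu_def]; linarith
  -- PS²A²R² ≤ PS²/m * u²
  have h8 : PS^2*A^2*R^2 ≤ PS^2/m * u^2 := by
    rw [div_mul_eq_mul_div, le_div_iff₀ hm]
    have hu2 : u ≤ u^2 := by nlinarith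
    linarith [mul_le_mul_of_nonneg_left hmu (sq_nonneg PS),
      mul_le_mul_of_nonneg_left hu2 (sq_nonneg PS)]
  -- 4u|D|A²R² ≤ 4|D|/m * u²
  have h9 : 4*u*(|D| * A^2)*R^2 ≤ 4*|D|/m * u^2 := by
    rw [div_mul_eq_mul_div, le_div_iff₀ hm]
    have := mul_le_mul_of_nonneg_left hmu (by positivity : (0:ℝ) ≤ 4*|D| * u)
    linarith [mul_le_mul_of_nonneg_right this hu0.le]
  have h6 : |(PS*A + 0*(A^3*R^2))^2 - 4*u*(D*A^2)| * R^2
      ≤ (PS^2*A^2 + 4*u*(|D| * A^2)) * R^2 :=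
    mul_le_mul_of_nonneg_right hNbd (sq_nonneg R)
  have e3 : (4*PS^2 + 16*|D|)/m * u^2 / 4 = PS^2/m*u^2 + 4*|D|/m*u^2 := by ring
  rw [e3]
  calc |(PS*A + 0*(A^3*R^2))^2 - 4*u*(D*A^2)| * R^2
      ≤ (PS^2*A^2 + 4*u*(|D| * A^2)) * R^2 := h6
    _ = PS^2*A^2*R^2 + 4*u*(|D| * A^2)*R^2 := by ring
    _ ≤ PS^2/m*u^2 + 4*|D|/m*u^2 := add_le_add h8 h9

set_option maxHeartbeats 1000000 in
lemma key (k : ℕ) (m PS q D : ℝ) (hm : 0 < m) (F : ℝ → ℝ)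
    (hF : ∀ R : ℝ, 1 ≤ R → F R =
      ((PS * R ^ k + q * R ^ (3*k+2)) ^ 2
          - 4 * (1 + m * R ^ (2*k+2)) * (D * R ^ (2*k)))
        / (1 + m * R ^ (2*k+2)) ^ 3
        / (1 - √((√(1 + m * R ^ (2*k+2)) - 1) / (√(1 + m * R ^ (2*k+2)) + 1))) ^ 2) :
    Tendsto F atTop (nhds 0) ↔ q = 0 := by
  have hrep : ∀ R : ℝ, 1 ≤ R → F R =
      ((PS * R^k + q * ((R^k)^3 * R^2)) ^ 2
          - 4 * (1 + m * ((R^k)^2 * R^2)) * (D * (R^k)^2))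
        / (1 + m * ((R^k)^2 * R^2)) ^ 3
        / (1 - √((√(1 + m * ((R^k)^2 * R^2)) - 1) / (√(1 + m * ((R^k)^2 * R^2)) + 1))) ^ 2 := by
    intro R hR
    rw [hF R hR, show R^(3*k+2) = (R^k)^3 * R^2 by ring,
      show R^(2*k+2) = (R^k)^2 * R^2 by ring, show R^(2*k) = (R^k)^2 by ring]
  constructor
  · intro hT
    by_contra hq
    have hq2 : 0 < q^2 := by positivity
    have hq0 : (0:ℝ) < |q| := abs_pos.mpr hq
    set c1 : ℝ := q^2/(32*(1+m)^2) with hc1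
    have hc1pos : 0 < c1 := by positivity
    have hev : ∀ᶠ R in atTop, c1 ≤ F R := by
      filter_upwards [eventually_ge_atTop (1:ℝ),
        eventually_ge_atTop (2*|PS|/|q|),
        eventually_ge_atTop (32*(1+m)*|D|/q^2)] with R hR1 hR2 hR3
      rw [hrep R hR1]
      clear hrep hF hT
      have hA : 1 ≤ R^k := one_le_pow₀ hR1
      have hPSR : 2*|PS| ≤ |q| * R := by
        rw [div_le_iff₀ hq0] at hR2; linarith [hR2]
      have hDR : 32*(1+m)*|D| ≤ q^2*R^2 := by
        rw [div_le_iff₀ hq2] at hR3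
        have hRsq : R ≤ R^2 := by nlinarith
        have := mul_le_mul_of_nonneg_left hRsq (sq_nonneg q)
        nlinarith [hR3, this]
      have hcore := lower_core m PS q D (R^k) R hm hA hR1 hq hPSR hDR
      have hu1 : 1 ≤ 1 + m*((R^k)^2*R^2) := one_le_u m (R^k) R hm hA hR1
      have huU := u_le_bound m (R^k) R hm hA hR1
      have hu0 : (0:ℝ) < 1 + m*((R^k)^2*R^2) := by linarith
      set u : ℝ := 1 + m*((R^k)^2*R^2) with hu_def
      have hddb := dd_bounds u hu1
      have hddpos : 0 < (1 - √((√u - 1)/(√u + 1)))^2 :=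
        lt_of_lt_of_le (by positivity) hddb.1
      rw [div_div, le_div_iff₀ (mul_pos (by positivity) hddpos)]
      calc c1 * (u^3 * (1 - √((√u - 1)/(√u + 1)))^2)
          ≤ c1 * (u^3 * (4/u)) := by gcongr; exact hddb.2
        _ = 4 * u^2 * c1 := by field_simp
        _ ≤ 4 * ((1+m)*((R^k)^2*R^2))^2 * c1 := by
            have hsq : u^2 ≤ ((1+m)*((R^k)^2*R^2))^2 := by nlinarith [hu0]
            nlinarith [hsq, hc1pos]
        _ ≤ (PS * R^k + q * ((R^k)^3 * R^2))^2 - 4*u*(D*(R^k)^2) := by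
            rw [hc1]; exact hcore
    have hlt : ∀ᶠ R in atTop, F R < c1 := hT.eventually (eventually_lt_nhds hc1pos)
    obtain ⟨R, hge, hlt'⟩ := (hev.and hlt).exists
    linarith
  · intro hq
    subst hq
    have hC : Tendsto (fun R : ℝ => (4*PS^2 + 16*|D|)/m / R^2) atTop (nhds 0) := by
      have h1 : Tendsto (fun R : ℝ => R^2) atTop atTop := tendsto_pow_atTop (by norm_num)
      have h2 := h1.inv_tendsto_atTop
      have := h2.const_mul ((4*PS^2 + 16*|D|)/m)
      simpa [div_eq_mul_inv] using this
    apply squeeze_zero_norm' _ hC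
    filter_upwards [eventually_ge_atTop (1:ℝ)] with R hR1
    rw [hrep R hR1]
    clear hrep hF
    have hA : 1 ≤ R^k := one_le_pow₀ hR1
    have hcore := upper_core m PS D (R^k) R hm hA hR1
    have hu1 : 1 ≤ 1 + m*((R^k)^2*R^2) := one_le_u m (R^k) R hm hA hR1
    have hu0 : (0:ℝ) < 1 + m*((R^k)^2*R^2) := by linarith
    set u : ℝ := 1 + m*((R^k)^2*R^2) with hu_def
    have hddb := dd_bounds u hu1
    have hddpos : 0 < (1 - √((√u - 1)/(√u + 1)))^2 :=
      lt_of_lt_of_le (by positivity) hddb.1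
    rw [Real.norm_eq_abs, div_div, abs_div,
      abs_of_nonneg (le_of_lt (mul_pos (by positivity : (0:ℝ) < u^3) hddpos)),
      div_le_div_iff₀ (mul_pos (by positivity : (0:ℝ) < u^3) hddpos)
        (by positivity : (0:ℝ) < R^2)]
    have hstep : (4*PS^2 + 16*|D|)/m * u^2 / 4
        ≤ (4*PS^2 + 16*|D|)/m * (u^3 * (1 - √((√u - 1)/(√u + 1)))^2) := by
      have hC0 : (0:ℝ) ≤ (4*PS^2 + 16*|D|)/m := by positivity
      have h10 := mul_le_mul_of_nonneg_left hddb.1 (by positivity : (0:ℝ) ≤ u^3)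
      have e4 : u^3 * (1/(4*u)) = u^2/4 := by field_simp
      rw [e4] at h10
      calc (4*PS^2 + 16*|D|)/m * u^2 / 4 = (4*PS^2 + 16*|D|)/m * (u^2/4) := by ring
        _ ≤ (4*PS^2 + 16*|D|)/m * (u^3 * (1 - √((√u - 1)/(√u + 1)))^2) :=
            mul_le_mul_of_nonneg_left h10 hC0
    linarith [hcore, hstep]

/-- For a homogeneous polynomial graph with nonvanishing gradient at
`(cos A, sin A)`, there is an umbilic point at infinity at `A`
(i.e. `(κ₁ − κ₂)²/d² → 0` along the ray of direction `A`) if and only if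
`Q(f)(cos A, sin A) = 0`, i.e. iff the tangent direction to the level set of `f`
at infinity is an asymptotic direction. -/
theorem umbilic_at_infinity_iff_Q_vanishes (p : MvPolynomial (Fin 2) ℝ) (n : ℕ)
    (hn : 2 ≤ n) (hp : p.IsHomogeneous n) (A : ℝ)
    (hgrad : (ev (Dx p) (Real.cos A) (Real.sin A),
              ev (Dy p) (Real.cos A) (Real.sin A)) ≠ (0, 0)) :
    Tendsto (fun R : ℝ =>
        Delta2 p (R * Real.cos A) (R * Real.sin A)
          / (dInf p (R * Real.cos A) (R * Real.sin A)) ^ 2)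
      atTop (nhds 0)
    ↔ ev (Qf p) (Real.cos A) (Real.sin A) = 0 := by
  obtain ⟨k, rfl⟩ : ∃ k, n = k + 2 := ⟨n - 2, by omega⟩
  set c := Real.cos A with hc
  set s := Real.sin A with hs
  have hpx : (Dx p).IsHomogeneous (k+1) := isHomogeneous_pderiv' hp 0
  have hpy : (Dy p).IsHomogeneous (k+1) := isHomogeneous_pderiv' hp 1
  have hpxx : (Dx (Dx p)).IsHomogeneous k := isHomogeneous_pderiv' hpx 0
  have hpxy : (Dy (Dx p)).IsHomogeneous k := isHomogeneous_pderiv' hpx 1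
  have hpyy : (Dy (Dy p)).IsHomogeneous k := isHomogeneous_pderiv' hpy 1
  set a := ev (Dx p) c s with ha
  set b := ev (Dy p) c s with hb
  set P := ev (Dx (Dx p)) c s with hP
  set Q2 := ev (Dy (Dx p)) c s with hQ2
  set S := ev (Dy (Dy p)) c s with hS
  have hab : a ≠ 0 ∨ b ≠ 0 := by
    by_contra h
    push_neg at h
    exact hgrad (by rw [h.1, h.2])
  have hm : 0 < a^2 + b^2 := by rcases hab with h|h <;> positivity
  have hqv : ev (Qf p) c s = P*b^2 - 2*Q2*a*b + S*a^2 := by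
    rw [ha, hb, hP, hQ2, hS]
    simp only [Qf, ev, map_sub, map_add, map_mul, map_pow, map_ofNat]
    try ring
  have hF : ∀ R : ℝ, 1 ≤ R →
      Delta2 p (R * c) (R * s) / (dInf p (R * c) (R * s)) ^ 2 =
      (((P+S) * R ^ k + ev (Qf p) c s * R ^ (3*k+2)) ^ 2
          - 4 * (1 + (a^2+b^2) * R ^ (2*k+2)) * ((P*S - Q2^2) * R ^ (2*k)))
        / (1 + (a^2+b^2) * R ^ (2*k+2)) ^ 3
        / (1 - √((√(1 + (a^2+b^2) * R ^ (2*k+2)) - 1)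
            / (√(1 + (a^2+b^2) * R ^ (2*k+2)) + 1))) ^ 2 := by
    intro R hR
    have ex : ev (Dx p) (R*c) (R*s) = R^(k+1) * a := by rw [ev_scale hpx, ha]
    have ey : ev (Dy p) (R*c) (R*s) = R^(k+1) * b := by rw [ev_scale hpy, hb]
    have exx : ev (Dx (Dx p)) (R*c) (R*s) = R^k * P := by rw [ev_scale hpxx, hP]
    have exy : ev (Dy (Dx p)) (R*c) (R*s) = R^k * Q2 := by rw [ev_scale hpxy, hQ2]
    have eyy : ev (Dy (Dy p)) (R*c) (R*s) = R^k * S := by rw [ev_scale hpyy, hS]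
    simp only [Delta2, dInf, Wgr, ex, ey, exx, exy, eyy]
    have harg : 1 + (R^(k+1) * a)^2 + (R^(k+1) * b)^2 = 1 + (a^2+b^2) * R^(2*k+2) := by
      ring
    rw [harg]
    have hnum : ((1 + (R^(k+1) * b)^2) * (R^k * P)
          - 2 * (R^(k+1) * a) * (R^(k+1) * b) * (R^k * Q2)
          + (1 + (R^(k+1) * a)^2) * (R^k * S)) ^ 2
          - 4 * (1 + (a^2+b^2) * R^(2*k+2)) * ((R^k * P) * (R^k * S) - (R^k * Q2)^2)
        = ((P+S) * R ^ k + ev (Qf p) c s * R ^ (3*k+2)) ^ 2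
          - 4 * (1 + (a^2+b^2) * R ^ (2*k+2)) * ((P*S - Q2^2) * R ^ (2*k)) := by
      rw [hqv]; ring
    rw [hnum]
  exact key k (a^2+b^2) (P+S) (ev (Qf p) c s) (P*S - Q2^2) hm _ hF
end

section
/- Let f be a real polynomial in two variables, homogeneous of degree n ≥ 2, and let v = (cos θ, sin θ) be a point of the unit circle. Then Q(f)(v) = 0 if and only if f(v) = 0 or the determinant of the Hessian of f vanishes at v, i.e. (f_xx·f_yy − f_xy²)(v) = 0. Hence the umbilic points at infinity of the graph of f occur exactly where either f or the Hessian determinant of f vanishes on the circle at infinity. -/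
open MvPolynomial Real Filter

section Aux

lemma X_mul_pderiv_monomial' (i : Fin 2) (d : Fin 2 →₀ ℕ) (a : ℝ) :
    X i * pderiv i (monomial d a) = monomial d (a * d i) := by
  rw [pderiv_monomial]
  rcases Nat.eq_zero_or_pos (d i) with h | h
  · simp [h]
  · have hle : Finsupp.single i 1 ≤ d := Finsupp.single_le_iff.mpr h
    rw [X, monomial_mul, one_mul, add_comm (Finsupp.single i 1) (d - Finsupp.single i 1),
      tsub_add_cancel_of_le hle]

lemma euler_formal {p : MvPolynomial (Fin 2) ℝ} {n : ℕ} (hp : p.IsHomogeneous n) :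
    X 0 * pderiv 0 p + X 1 * pderiv 1 p = C (n : ℝ) * p := by
  conv_lhs => rw [p.as_sum]
  conv_rhs => rw [p.as_sum]
  rw [map_sum (pderiv (0 : Fin 2)), map_sum (pderiv (1 : Fin 2)), Finset.mul_sum,
    Finset.mul_sum, Finset.mul_sum, ← Finset.sum_add_distrib]
  refine Finset.sum_congr rfl fun d hd => ?_
  rw [X_mul_pderiv_monomial', X_mul_pderiv_monomial', C_mul_monomial]
  have hw : (Finsupp.weight 1) d = n := hp (mem_support_iff.mp hd)
  rw [show (Finsupp.weight 1 : (Fin 2 →₀ ℕ) →+ ℕ) = Finsupp.weight (fun _ => 1) from rfl,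
    ← Finsupp.degree_eq_weight_one] at hw
  have hsum : d 0 + d 1 = n := by
    rw [← Fin.sum_univ_two (f := fun i => d i), ← hw]
    exact (Finset.sum_subset (Finset.subset_univ _)
      (fun i _ hi => Finsupp.notMem_support_iff.mp hi)).symm
  rw [← map_add (monomial d)]
  congr 1
  rw [← hsum]
  push_cast
  ring

lemma pderiv_comm' (i j : Fin 2) (p : MvPolynomial (Fin 2) ℝ) :
    pderiv i (pderiv j p) = pderiv j (pderiv i p) := by
  rcases eq_or_ne i j with rfl | hij
  · rfl
  · induction p using MvPolynomial.induction_on' with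
    | monomial d a =>
      simp only [pderiv_monomial]
      rw [Finsupp.tsub_apply, Finsupp.tsub_apply, Finsupp.single_eq_of_ne' hij,
        Finsupp.single_eq_of_ne' (Ne.symm hij)]
      congr 1
      · rw [tsub_tsub, tsub_tsub, add_comm]
      · simp only [Nat.sub_zero]; ring
    | add q r hq hr => simp only [map_add, hq, hr]

lemma key_identity (nr a b A B C F c s : ℝ) (hcs : c ^ 2 + s ^ 2 = 1)
    (h1 : c * a + s * b = nr * F) (h2 : c * A + s * B = (nr - 1) * a)
    (h3 : c * B + s * C = (nr - 1) * b) :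
    (nr - 1) * (A * b ^ 2 - 2 * B * a * b + C * a ^ 2) = nr * F * (A * C - B ^ 2) := by
  have hq11 : c ^ 2 * A + 2 * c * s * B + s ^ 2 * C = nr * (nr - 1) * F := by
    linear_combination c * h2 + s * h3 + (nr - 1) * h1
  have hq12 : -(s * c) * A + (c ^ 2 - s ^ 2) * B + s * c * C = (nr - 1) * (b * c - a * s) := by
    linear_combination (-s) * h2 + c * h3
  set α := b * c - a * s with hα
  set q22 := s ^ 2 * A - 2 * s * c * B + c ^ 2 * C with hq22
  have hdet : A * C - B ^ 2 = nr * (nr - 1) * F * q22 - ((nr - 1) * α) ^ 2 := by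
    linear_combination q22 * hq11 -
      (-(s * c) * A + (c ^ 2 - s ^ 2) * B + s * c * C + (nr - 1) * α) * hq12 -
      (A * C - B ^ 2) * (c ^ 2 + s ^ 2 + 1) * hcs
  have hQ : A * b ^ 2 - 2 * B * a * b + C * a ^ 2 =
      α ^ 2 * (nr * (nr - 1) * F) + 2 * α * (-(nr * F)) * ((nr - 1) * α)
        + (nr * F) ^ 2 * q22 := by
    linear_combination (-(A * b ^ 2 - 2 * B * a * b + C * a ^ 2)) * (c ^ 2 + s ^ 2 + 1) * hcs +
      α ^ 2 * hq11 + 2 * α * (-(a * c + b * s)) * hq12 +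
      (-2 * α * ((nr - 1) * α) - (-(a * c + b * s) - nr * F) * q22) * h1
  linear_combination (nr - 1) * hQ - nr * F * hdet

end Aux

/-- For a homogeneous polynomial `f` of degree `n ≥ 2` and a point
`v = (cos θ, sin θ)` of the unit circle, `Q(f)(v) = 0` iff `f(v) = 0` or the
Hessian determinant of `f` vanishes at `v`: the umbilic points at infinity occur
exactly where `f` or `|Hess f|` vanishes on the circle at infinity. -/
theorem Q_vanishes_iff_f_or_hessian_vanishes (p : MvPolynomial (Fin 2) ℝ) (n : ℕ)
    (hn : 2 ≤ n) (hp : p.IsHomogeneous n) (θ : ℝ) :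
    ev (Qf p) (Real.cos θ) (Real.sin θ) = 0 ↔
      ev p (Real.cos θ) (Real.sin θ) = 0 ∨
      ev (Dx (Dx p)) (Real.cos θ) (Real.sin θ) * ev (Dy (Dy p)) (Real.cos θ) (Real.sin θ)
        - ev (Dy (Dx p)) (Real.cos θ) (Real.sin θ) ^ 2 = 0 := by
  have hcs : Real.cos θ ^ 2 + Real.sin θ ^ 2 = 1 := Real.cos_sq_add_sin_sq θ
  set c := Real.cos θ
  set s := Real.sin θ
  set e : MvPolynomial (Fin 2) ℝ →+* ℝ := eval ![c, s] with he
  have hX0 : e (X 0) = c := by simp [he]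
  have hX1 : e (X 1) = s := by simp [he]
  -- Euler identities
  have E0 := euler_formal hp
  have E1 := congrArg (pderiv (0 : Fin 2)) E0
  have E2 := congrArg (pderiv (1 : Fin 2)) E0
  simp only [map_add, pderiv_mul, pderiv_X_self, pderiv_C, zero_mul, map_zero,
    pderiv_X_of_ne (show (1 : Fin 2) ≠ 0 by decide),
    pderiv_X_of_ne (show (0 : Fin 2) ≠ 1 by decide), one_mul, zero_mul, mul_zero,
    zero_add, add_zero] at E1 E2
  rw [pderiv_comm' 0 1 p] at E1
  -- evaluate everything at (c, s)
  have e0 := congrArg e E0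
  have e1 := congrArg e E1
  have e2 := congrArg e E2
  simp only [map_add, map_mul, hX0, hX1, eval_C, he, eval_X, Matrix.cons_val_zero, Matrix.cons_val_one,
    Matrix.head_cons] at e0 e1 e2
  -- abbreviations
  set F := eval ![c, s] p with hF
  set a := eval ![c, s] (pderiv (0 : Fin 2) p) with ha
  set b := eval ![c, s] (pderiv (1 : Fin 2) p) with hb
  set A := eval ![c, s] (pderiv (0 : Fin 2) (pderiv (0 : Fin 2) p)) with hA
  set B := eval ![c, s] (pderiv (1 : Fin 2) (pderiv (0 : Fin 2) p)) with hB
  set Cc := eval ![c, s] (pderiv (1 : Fin 2) (pderiv (1 : Fin 2) p)) with hC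
  have h1 : c * a + s * b = (n : ℝ) * F := e0
  have h2 : c * A + s * B = ((n : ℝ) - 1) * a := by linear_combination e1
  have h3 : c * B + s * Cc = ((n : ℝ) - 1) * b := by linear_combination e2
  have key := key_identity (n : ℝ) a b A B Cc F c s hcs h1 h2 h3
  have hQev : ev (Qf p) c s = A * b ^ 2 - 2 * B * a * b + Cc * a ^ 2 := by
    simp only [ev, Qf, Dx, Dy, map_sub, map_add, map_mul, map_pow, map_ofNat]
    rfl
  have hev : ev (Dx (Dx p)) c s = A ∧ ev (Dy (Dy p)) c s = Cc ∧ ev (Dy (Dx p)) c s = B ∧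
      ev p c s = F := by
    refine ⟨rfl, rfl, rfl, rfl⟩
  obtain ⟨eA, eC, eB, eF⟩ := hev
  rw [hQev, eA, eC, eB, eF]
  have hn1 : (n : ℝ) - 1 ≠ 0 := by
    have : (2 : ℝ) ≤ (n : ℝ) := by exact_mod_cast hn
    linarith
  have hn0 : (n : ℝ) ≠ 0 := by
    have : (2 : ℝ) ≤ (n : ℝ) := by exact_mod_cast hn
    linarith
  constructor
  · intro h
    have : (n : ℝ) * F * (A * Cc - B ^ 2) = 0 := by rw [← key, h, mul_zero]
    rcases mul_eq_zero.mp this with h' | h'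
    · rcases mul_eq_zero.mp h' with h'' | h''
      · exact absurd h'' hn0
      · exact Or.inl h''
    · exact Or.inr h'
  · intro h
    have hz : (n : ℝ) * F * (A * Cc - B ^ 2) = 0 := by
      rcases h with h | h
      · rw [h]; ring
      · rw [h]; ring
    have := key.trans hz
    rcases mul_eq_zero.mp this with h' | h'
    · exact absurd h' hn1
    · exact h'
end
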